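/- Let m ≥ 1 and let u : ℝ³ → ℝ^m be a C¹ map satisfying the inner variation identity on B₆₄(0). Then for every x ∈ ℝ³ and r > 0 with the closed ball B̄_r(x) contained in B₆₄(0), the function r ↦ H_φ(x,r) is differentiable at r and ∂_r H_φ(x,r) = (2/r) H_φ(x,r) + 2 D_φ(x,r). -/

import Mathlib

open MeasureTheory Metric

noncomputable section

/-- `ℝ³` as a Euclidean space. -/
abbrev E3 : Type := EuclideanSpace ℝ (Fin 3)

/-- The cutoff function `φ`: `1` on `[0,1/2]`, `2 - 2t` on `[1/2,1]`, `0` on `[1,∞)`. -/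
def phi (t : ℝ) : ℝ := if t ≤ 1/2 then 1 else if t ≤ 1 then 2 - 2*t else 0

/-- The weight `ψ = -φ'` (a.e.): `2` on `(1/2,1)` and `0` otherwise. -/
def psi (t : ℝ) : ℝ := if 1/2 < t ∧ t < 1 then 2 else 0

/-- The standard orthonormal basis of `ℝ³`. -/
def e3 (i : Fin 3) : E3 := EuclideanSpace.basisFun (Fin 3) ℝ i

/-- The radial unit vector field `ν_x(y) = (y - x)/|y - x|`. -/
def nu (x y : E3) : E3 := ‖y - x‖⁻¹ • (y - x)

/-- Squared Frobenius norm of the differential `|∇u(y)|²`. -/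
def gradSq {m : ℕ} (u : E3 → EuclideanSpace ℝ (Fin m)) (y : E3) : ℝ :=
  ∑ i : Fin 3, ‖fderiv ℝ u y (e3 i)‖ ^ 2

/-- Smoothed Dirichlet energy `D_φ(x,r)`. -/
def Dphi {m : ℕ} (u : E3 → EuclideanSpace ℝ (Fin m)) (x : E3) (r : ℝ) : ℝ :=
  ∫ y : E3, gradSq u y * phi (‖x - y‖ / r)

/-- Smoothed height `H_φ(x,r)`. -/
def Hphi {m : ℕ} (u : E3 → EuclideanSpace ℝ (Fin m)) (x : E3) (r : ℝ) : ℝ :=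
  ∫ y : E3, ‖u y‖ ^ 2 * ‖y - x‖⁻¹ * psi (‖x - y‖ / r)

/-- Smoothed remainder `E_φ(x,r)`. -/
def Ephi {m : ℕ} (u : E3 → EuclideanSpace ℝ (Fin m)) (x : E3) (r : ℝ) : ℝ :=
  ∫ y : E3, ‖fderiv ℝ u y (nu x y)‖ ^ 2 * ‖y - x‖ * psi (‖x - y‖ / r)

/-- Smoothed frequency `N_φ(x,r) = r D_φ(x,r)/H_φ(x,r)`. -/
def Nphi {m : ℕ} (u : E3 → EuclideanSpace ℝ (Fin m)) (x : E3) (r : ℝ) : ℝ :=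
  r * Dphi u x r / Hphi u x r

/-- Frequency pinching `W_s^r(x) = N_φ(x,r) - N_φ(x,s)`. -/
def Wpinch {m : ℕ} (u : E3 → EuclideanSpace ℝ (Fin m)) (x : E3) (s r : ℝ) : ℝ :=
  Nphi u x r - Nphi u x s

/-- Classical height: integral of `|u|²` over the sphere `∂B_s(x)` with respect to the
two-dimensional Hausdorff (surface) measure. -/
def sphHeight {m : ℕ} (u : E3 → EuclideanSpace ℝ (Fin m)) (x : E3) (s : ℝ) : ℝ :=
  ∫ y in sphere x s, ‖u y‖ ^ 2 ∂(μH[2])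

/-- `u` satisfies the inner (target) variation identity on `Ω`. -/
def InnerVariation {m : ℕ} (u : E3 → EuclideanSpace ℝ (Fin m)) (Ω : Set E3) : Prop :=
  ∀ f : E3 → ℝ, (∃ K, LipschitzWith K f) → HasCompactSupport f → tsupport f ⊆ Ω →
    (∫ y : E3, ((inner ℝ (gradient (fun z => ‖u z‖ ^ 2 / 2) y) (gradient f y) : ℝ)
      + gradSq u y * f y)) = 0

/-- `u` satisfies the domain variation identity on `Ω`. -/
def DomainVariation {m : ℕ} (u : E3 → EuclideanSpace ℝ (Fin m)) (Ω : Set E3) : Prop :=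
  ∀ X : E3 → E3, (∃ K, LipschitzWith K X) → HasCompactSupport X → tsupport X ⊆ Ω →
    (∫ y : E3, (2 * ∑ i : Fin 3, ∑ j : Fin 3,
        (inner ℝ (fderiv ℝ u y (e3 i)) (fderiv ℝ u y (e3 j)) : ℝ)
          * (inner ℝ (fderiv ℝ X y (e3 i)) (e3 j) : ℝ)
      - gradSq u y * ∑ j : Fin 3, (inner ℝ (fderiv ℝ X y (e3 j)) (e3 j) : ℝ))) = 0

/-- The affine line through `a` in direction `v`. -/
def lineThrough (a v : E3) : Set E3 := {y | ∃ t : ℝ, y = a + t • v}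

/-- Jones-type `β₂` number `D_μ(x,r)`: infimum over affine lines `L` of
`r⁻³ ∫_{B_r(x)} dist(y,L)² dμ(y)`. -/
def JonesD (μ : Measure E3) (x : E3) (r : ℝ) : ℝ :=
  ⨅ p : E3 × {v : E3 // v ≠ 0},
    (∫ y in ball x r, Metric.infDist y (lineThrough p.1 p.2.1) ^ 2 ∂μ) / r ^ 3

/-! ### Auxiliary lemmas -/

lemma phi_eq : phi = fun t => max 0 (min 1 (2 - 2*t)) := by
  funext t
  unfold phi
  split_ifs with h1 h2
  · rw [min_eq_left (by linarith), max_eq_right (by norm_num)]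
  · rw [min_eq_right (by linarith), max_eq_right (by linarith)]
  · rw [min_eq_right (by linarith), max_eq_left (by linarith)]

lemma continuous_phi : Continuous phi := by
  rw [phi_eq]; fun_prop

lemma measurable_psi : Measurable psi := by
  unfold psi
  exact Measurable.ite (by exact measurableSet_Ioo) measurable_const measurable_const

lemma psi_nonneg (t : ℝ) : 0 ≤ psi t := by unfold psi; split_ifs <;> norm_num

lemma psi_eq_zero_of_le {t : ℝ} (h : t ≤ 1/2) : psi t = 0 := by
  unfold psi; rw [if_neg]; rintro ⟨h1, -⟩; linarith

lemma psi_eq_zero_of_ge {t : ℝ} (h : 1 ≤ t) : psi t = 0 := by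
  unfold psi; rw [if_neg]; rintro ⟨-, h2⟩; linarith

lemma psi_of_mem {t : ℝ} (h1 : 1/2 < t) (h2 : t < 1) : psi t = 2 := by
  unfold psi; rw [if_pos ⟨h1, h2⟩]

lemma phi_eq_zero_of_gt {t : ℝ} (h : 1 < t) : phi t = 0 := by
  unfold phi; rw [if_neg (by linarith), if_neg (by linarith)]

lemma abs_inv_mul_psi_le (t : ℝ) : |t⁻¹ * psi t| ≤ 4 := by
  unfold psi
  split_ifs with h
  · obtain ⟨h1, h2⟩ := h
    rw [abs_of_nonneg (by positivity)]
    have : t⁻¹ ≤ 2 := by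
      rw [show (2:ℝ) = (1/2 : ℝ)⁻¹ by norm_num]
      exact inv_anti₀ (by norm_num) h1.le
    linarith
  · simp

lemma scale_int (v : E3 → ℝ) (x : E3) {s : ℝ} (hs : 0 < s) :
    ∫ z : E3, v (x + s • z) = (s^3)⁻¹ * ∫ y : E3, v y := by
  have h1 : ∫ z : E3, v (x + s • z) = ∫ z : E3, (fun w => v (x + w)) (s • z) := rfl
  rw [h1, MeasureTheory.Measure.integral_comp_smul volume (fun w => v (x + w)) s,
    integral_add_left_eq_self]
  rw [finrank_euclideanSpace_fin, smul_eq_mul, abs_of_nonneg (by positivity)]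

lemma hasFDerivAt_norm_sub (x : E3) {y : E3} (h : y ≠ x) :
    HasFDerivAt (fun w => ‖w - x‖) (‖y - x‖⁻¹ • innerSL ℝ (y - x)) y := by
  have h0 : ‖y - x‖ ≠ 0 := by simp [sub_eq_zero, h]
  have h1 : HasFDerivAt (fun w : E3 => ‖w - x‖^2) (2 • innerSL ℝ (y - x)) y := by
    simpa using ((hasFDerivAt_id y).sub_const x).norm_sq
  have h2 : HasDerivAt Real.sqrt (1/(2 * Real.sqrt (‖y-x‖^2))) (‖y - x‖^2) :=
    Real.hasDerivAt_sqrt (by positivity)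
  have h3 := h2.comp_hasFDerivAt y h1
  have hfun : (Real.sqrt ∘ fun w : E3 => ‖w - x‖^2) = fun w => ‖w - x‖ := by
    funext w; simp [Function.comp, Real.sqrt_sq (norm_nonneg _)]
  rw [hfun, Real.sqrt_sq (norm_nonneg _)] at h3
  have heq : (1/(2*‖y-x‖)) • (2 • innerSL ℝ (y-x) : E3 →L[ℝ] ℝ)
      = ‖y - x‖⁻¹ • innerSL ℝ (y - x) := by
    ext w
    simp only [ContinuousLinearMap.smul_apply, smul_eq_mul, ContinuousLinearMap.coe_smul',
      Pi.smul_apply, nsmul_eq_mul, Nat.cast_ofNat]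
    field_simp
  rwa [heq] at h3

lemma gradient_of_eventually_const {f : E3 → ℝ} {y : E3} {a : ℝ} (h : f =ᶠ[nhds y] fun _ => a) :
    gradient f y = 0 := by
  have hc : HasFDerivAt f (0 : E3 →L[ℝ] ℝ) y :=
    (hasFDerivAt_const a y).congr_of_eventuallyEq h
  have : HasGradientAt f 0 y := by
    rw [hasGradientAt_iff_hasFDerivAt, map_zero]; exact hc
  exact this.gradient

lemma inner_gradient_eq (f : E3 → ℝ) (y : E3) (v : E3) :
    (inner ℝ (gradient f y) v : ℝ) = fderiv ℝ f y v := by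
  rw [← InnerProductSpace.toDual_apply_apply, gradient]
  simp

lemma integrable_of_bdd_compact {g : E3 → ℝ} (hg : AEStronglyMeasurable g volume)
    {s : Set E3} (hs : IsCompact s) (C : ℝ) (hb : ∀ y, |g y| ≤ C)
    (hsupp : ∀ y ∉ s, g y = 0) : Integrable g := by
  apply Integrable.mono' (g := s.indicator fun _ => C)
  · rw [integrable_indicator_iff hs.measurableSet]
    exact integrableOn_const hs.measure_lt_top.ne
  · exact hg
  · filter_upwards with y
    by_cases hy : y ∈ s
    · simpa [Set.indicator_of_mem hy] using hb y
    · simp [Set.indicator_of_notMem hy, hsupp y hy]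

lemma fderiv_normsq_half {m : ℕ} {u : E3 → EuclideanSpace ℝ (Fin m)} (hu : ContDiff ℝ 1 u)
    (y : E3) (v : E3) :
    fderiv ℝ (fun z => ‖u z‖ ^ 2 / 2) y v = (inner ℝ (u y) (fderiv ℝ u y v) : ℝ) := by
  have hd : HasFDerivAt u (fderiv ℝ u y) y := (hu.differentiable one_ne_zero y).hasFDerivAt
  have h1 : HasFDerivAt (fun z => ‖u z‖ ^ 2)
      (2 • (innerSL ℝ (u y)).comp (fderiv ℝ u y)) y := hd.norm_sq
  have h2 := h1.const_mul (1/2 : ℝ)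
  have hfun : (fun z => (1/2 : ℝ) * ‖u z‖ ^ 2) = fun z => ‖u z‖ ^ 2 / 2 := by
    funext z; ring
  rw [hfun] at h2
  rw [h2.fderiv]
  simp only [two_smul, ContinuousLinearMap.add_apply, ContinuousLinearMap.smul_apply,
    ContinuousLinearMap.coe_comp', Function.comp_apply, innerSL_apply_apply, smul_eq_mul]
  ring

/-- `f y = phi (‖y - x‖ / r)` is Lipschitz. -/
lemma lipschitz_cutoff (x : E3) {r : ℝ} (hr : 0 < r) :
    ∃ K, LipschitzWith K (fun y : E3 => phi (‖y - x‖ / r)) := by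
  have l1 : LipschitzWith 2 phi := by
    rw [phi_eq]
    have lin : LipschitzWith 2 (fun t : ℝ => 2 - 2*t) := by
      apply LipschitzWith.of_dist_le_mul
      intro a b
      rw [Real.dist_eq, Real.dist_eq]
      have : (2 - 2*a) - (2 - 2*b) = (-2) * (a - b) := by ring
      rw [this, abs_mul]
      norm_num
    exact (lin.const_min 1).const_max 0
  have l2 : LipschitzWith 1 (fun y : E3 => ‖y - x‖) := by
    apply LipschitzWith.of_dist_le_mul
    intro a b
    rw [NNReal.coe_one, one_mul, Real.dist_eq]
    calc |‖a - x‖ - ‖b - x‖| ≤ ‖(a - x) - (b - x)‖ := abs_norm_sub_norm_le _ _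
      _ = dist a b := by rw [dist_eq_norm]; congr 1; abel
  have l3 : LipschitzWith (Real.toNNReal r⁻¹) (fun t : ℝ => t / r) := by
    apply LipschitzWith.of_dist_le_mul
    intro a b
    rw [Real.coe_toNNReal _ (by positivity), Real.dist_eq, Real.dist_eq]
    rw [div_sub_div_same, abs_div, abs_of_pos hr, div_eq_inv_mul]
  exact ⟨_, (l1.comp l3).comp l2⟩

/-- The key consequence of the inner variation identity. -/
lemma key_IV {m : ℕ} (u : E3 → EuclideanSpace ℝ (Fin m)) (hu : ContDiff ℝ 1 u)
    (hiv : InnerVariation u (ball (0 : E3) 64)) (x : E3) {r : ℝ} (hr : 0 < r)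
    (hball : closedBall x r ⊆ ball (0 : E3) 64) :
    ∫ y : E3, (inner ℝ (u y) (fderiv ℝ u y (y - x)) : ℝ) * (‖y - x‖⁻¹ * psi (‖y - x‖ / r))
      = r * Dphi u x r := by
  have hrne : r ≠ 0 := ne_of_gt hr
  set q : E3 → ℝ := fun z => ‖u z‖ ^ 2 / 2 with hq
  set f : E3 → ℝ := fun y => phi (‖y - x‖ / r) with hfdef
  have hnormc : Continuous (fun w : E3 => ‖w - x‖) := by fun_prop
  have hfsupp : ∀ y ∉ closedBall x r, f y = 0 := by
    intro y hy
    have h1 : r < ‖y - x‖ := by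
      rw [mem_closedBall, dist_eq_norm, not_le] at hy
      exact hy
    exact phi_eq_zero_of_gt (by rw [lt_div_iff₀ hr, one_mul]; exact h1)
  have hcs : HasCompactSupport f := HasCompactSupport.intro (isCompact_closedBall x r) hfsupp
  have hts : tsupport f ⊆ ball (0:E3) 64 :=
    (closure_minimal (Function.support_subset_iff'.2 hfsupp) isClosed_closedBall).trans hball
  have IV := hiv f (lipschitz_cutoff x hr) hcs hts
  have hUcont : Continuous u := hu.continuous
  have hDcont : Continuous (fderiv ℝ u) := hu.continuous_fderiv one_ne_zero
  set T : E3 → ℝ := fun y =>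
    (inner ℝ (u y) (fderiv ℝ u y (y - x)) : ℝ) * (‖y - x‖⁻¹ * psi (‖y - x‖ / r)) with hT
  obtain ⟨Mu, hMu⟩ := (isCompact_closedBall x r).exists_bound_of_continuousOn hUcont.continuousOn
  obtain ⟨Md, hMd⟩ := (isCompact_closedBall x r).exists_bound_of_continuousOn hDcont.continuousOn
  have hMu0 : 0 ≤ Mu := le_trans (norm_nonneg _) (hMu x (mem_closedBall_self hr.le))
  have hMd0 : 0 ≤ Md := le_trans (norm_nonneg _) (hMd x (mem_closedBall_self hr.le))
  -- second factor bound
  have hsecond : ∀ y : E3, |‖y - x‖⁻¹ * psi (‖y - x‖ / r)| ≤ 4 / r := by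
    intro y
    have heq2 : ‖y - x‖⁻¹ * psi (‖y - x‖ / r)
        = r⁻¹ * ((‖y - x‖ / r)⁻¹ * psi (‖y - x‖ / r)) := by
      rw [inv_div]
      calc ‖y - x‖⁻¹ * psi (‖y - x‖ / r)
          = (r⁻¹ * r) * ‖y - x‖⁻¹ * psi (‖y - x‖ / r) := by
            rw [inv_mul_cancel₀ hrne, one_mul]
        _ = r⁻¹ * (r / ‖y - x‖ * psi (‖y - x‖ / r)) := by
            rw [div_eq_mul_inv]; ring
    rw [heq2, abs_mul, abs_of_pos (inv_pos.2 hr)]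
    calc r⁻¹ * |(‖y - x‖ / r)⁻¹ * psi (‖y - x‖ / r)| ≤ r⁻¹ * 4 := by
          apply mul_le_mul_of_nonneg_left (abs_inv_mul_psi_le _) (inv_pos.2 hr).le
      _ = 4 / r := by rw [div_eq_mul_inv]; ring
  have hTsupp : ∀ y ∉ closedBall x r, T y = 0 := by
    intro y hy
    have h1 : r < ‖y - x‖ := by
      rw [mem_closedBall, dist_eq_norm, not_le] at hy
      exact hy
    have : psi (‖y - x‖ / r) = 0 :=
      psi_eq_zero_of_ge (le_of_lt (by rw [lt_div_iff₀ hr, one_mul]; exact h1))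
    simp [hT, this]
  have hTbound : ∀ y : E3, |T y| ≤ Mu * (Md * r) * (4 / r) := by
    intro y
    by_cases hy : y ∈ closedBall x r
    · have hyn : ‖y - x‖ ≤ r := by rwa [mem_closedBall, dist_eq_norm] at hy
      have hinner : |(inner ℝ (u y) (fderiv ℝ u y (y - x)) : ℝ)| ≤ Mu * (Md * r) := by
        calc |(inner ℝ (u y) (fderiv ℝ u y (y - x)) : ℝ)|
            ≤ ‖u y‖ * ‖fderiv ℝ u y (y - x)‖ := abs_real_inner_le_norm _ _
          _ ≤ Mu * (Md * r) := by
              apply mul_le_mul (hMu y hy) ?_ (norm_nonneg _) hMu0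
              calc ‖fderiv ℝ u y (y - x)‖ ≤ ‖fderiv ℝ u y‖ * ‖y - x‖ :=
                    (fderiv ℝ u y).le_opNorm _
                _ ≤ Md * r := mul_le_mul (hMd y hy) hyn (norm_nonneg _) hMd0
      calc |T y| = |(inner ℝ (u y) (fderiv ℝ u y (y - x)) : ℝ)|
            * |‖y - x‖⁻¹ * psi (‖y - x‖ / r)| := abs_mul _ _
        _ ≤ Mu * (Md * r) * (4 / r) := by
            apply mul_le_mul hinner (hsecond y) (abs_nonneg _) (by positivity)
    · rw [hTsupp y hy, abs_zero]; positivity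
  have hinnercont : Continuous (fun y : E3 => (inner ℝ (u y) (fderiv ℝ u y (y - x)) : ℝ)) :=
    hUcont.inner (hDcont.clm_apply (continuous_id.sub continuous_const))
  have hTmeas : AEStronglyMeasurable T volume := by
    apply hinnercont.aestronglyMeasurable.mul
    exact ((hnormc.measurable.inv).mul
      (measurable_psi.comp ((hnormc.div_const r).measurable))).aestronglyMeasurable
  have intT : Integrable T :=
    integrable_of_bdd_compact hTmeas (isCompact_closedBall x r) _ hTbound hTsupp
  -- the a.e. identity for the first integrand
  have hS0 : volume (sphere x (r/2) ∪ sphere x r : Set E3) = 0 :=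
    measure_union_null (Measure.addHaar_sphere _ _ _) (Measure.addHaar_sphere _ _ _)
  have hae : ∀ᵐ (y : E3), y ∉ (sphere x (r/2) ∪ sphere x r : Set E3) :=
    measure_eq_zero_iff_ae_notMem.mp hS0
  have hAE : (fun y => (inner ℝ (gradient q y) (gradient f y) : ℝ))
      =ᵐ[volume] fun y => -(r⁻¹) * T y := by
    filter_upwards [hae] with y hy
    rw [Set.mem_union, not_or, mem_sphere_iff_norm, mem_sphere_iff_norm] at hy
    obtain ⟨hs1, hs2⟩ := hy
    rcases lt_trichotomy ‖y - x‖ (r/2) with hlt | heq | hgt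
    · -- inner region: f locally 1
      have hev : f =ᶠ[nhds y] fun _ => (1:ℝ) := by
        filter_upwards [(isOpen_lt hnormc continuous_const).mem_nhds
          (show ‖y - x‖ < r/2 from hlt)] with w hw
        have : ‖w - x‖ / r ≤ 1/2 := by
          rw [div_le_div_iff₀ hr (by norm_num)]
          have hw' : ‖w - x‖ < r/2 := hw
          linarith
        simp only [hfdef]
        unfold phi
        rw [if_pos this]
      rw [gradient_of_eventually_const hev, inner_zero_right]
      have : psi (‖y - x‖ / r) = 0 := psi_eq_zero_of_le (by
        rw [div_le_div_iff₀ hr (by norm_num)]; linarith)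
      simp [hT, this]
    · exact absurd heq hs1
    · rcases lt_trichotomy ‖y - x‖ r with hlt2 | heq2 | hgt2
      · -- annulus
        have hyx : y ≠ x := by
          intro h; rw [h, sub_self, norm_zero] at hgt; linarith
        have hev : f =ᶠ[nhds y] fun w => 2 - (2/r) * ‖w - x‖ := by
          have hopen : IsOpen {w : E3 | r/2 < ‖w - x‖ ∧ ‖w - x‖ < r} :=
            (isOpen_lt continuous_const hnormc).inter (isOpen_lt hnormc continuous_const)
          filter_upwards [hopen.mem_nhds ⟨hgt, hlt2⟩] with w hw
          obtain ⟨hw1, hw2⟩ := hw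
          have ht1 : ¬ (‖w - x‖ / r ≤ 1/2) := by
            rw [not_le, div_lt_div_iff₀ (by norm_num) hr]; linarith
          have ht2 : ‖w - x‖ / r ≤ 1 := by
            rw [div_le_one hr]; exact hw2.le
          simp only [hfdef]
          unfold phi
          rw [if_neg ht1, if_pos ht2]
          field_simp
        have hFf : HasFDerivAt f
            (-((2/r) • (‖y - x‖⁻¹ • innerSL ℝ (y - x)))) y := by
          have h2 := ((hasFDerivAt_norm_sub x hyx).const_mul (2/r)).const_sub 2
          exact h2.congr_of_eventuallyEq hev
        have hgradf : HasGradientAt f ((-(2/r) * ‖y - x‖⁻¹) • (y - x)) y := by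
          rw [hasGradientAt_iff_hasFDerivAt]
          have : (InnerProductSpace.toDual ℝ E3) ((-(2/r) * ‖y - x‖⁻¹) • (y - x))
              = -((2/r) • (‖y - x‖⁻¹ • innerSL ℝ (y - x))) := by
            ext w
            simp only [InnerProductSpace.toDual_apply_apply, real_inner_smul_left,
              ContinuousLinearMap.neg_apply, ContinuousLinearMap.smul_apply, innerSL_apply_apply,
              smul_eq_mul]
            ring
          rw [this]
          exact hFf
        rw [hgradf.gradient, real_inner_smul_right, inner_gradient_eq, fderiv_normsq_half hu]
        have hpsi : psi (‖y - x‖ / r) = 2 := by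
          apply psi_of_mem
          · rw [div_lt_div_iff₀ (by norm_num) hr]; linarith
          · rw [div_lt_one hr]; exact hlt2
        simp only [hT, hpsi]
        ring
      · exact absurd heq2 hs2
      · -- outer region: f locally 0
        have hev : f =ᶠ[nhds y] fun _ => (0:ℝ) := by
          filter_upwards [(isOpen_lt continuous_const hnormc).mem_nhds
            (show r < ‖y - x‖ from hgt2)] with w hw
          exact phi_eq_zero_of_gt (by rw [lt_div_iff₀ hr, one_mul]; exact hw)
        rw [gradient_of_eventually_const hev, inner_zero_right]
        have : psi (‖y - x‖ / r) = 0 := psi_eq_zero_of_ge (by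
          rw [le_div_iff₀ hr, one_mul]; exact hgt2.le)
        simp [hT, this]
  -- integrability of both summands
  have intA : Integrable (fun y => (inner ℝ (gradient q y) (gradient f y) : ℝ)) :=
    ((intT.const_mul (-(r⁻¹))).congr hAE.symm)
  have hgscont : Continuous (gradSq u) := by
    apply continuous_finset_sum
    intro i _
    exact ((hDcont.clm_apply continuous_const).norm.pow 2)
  have hfcont : Continuous f := continuous_phi.comp (hnormc.div_const r)
  have intB : Integrable (fun y => gradSq u y * f y) := by
    apply Continuous.integrable_of_hasCompactSupport (hgscont.mul hfcont)
    exact hcs.mul_left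
  rw [integral_add intA intB, integral_congr_ae hAE, integral_const_mul] at IV
  have hB : ∫ y : E3, gradSq u y * f y = Dphi u x r := by
    rw [Dphi]
    apply integral_congr_ae
    filter_upwards with y
    rw [hfdef]
    simp only
    rw [norm_sub_rev]
  rw [hB] at IV
  have : ∫ y : E3, T y = r * Dphi u x r := by
    have h1 : r⁻¹ * ∫ y : E3, T y = Dphi u x r := by linarith
    calc ∫ y : E3, T y = r * (r⁻¹ * ∫ y : E3, T y) := by
          field_simp
      _ = r * Dphi u x r := by rw [h1]
  exact this

/-- radial derivative of the smoothed height. -/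
theorem stmt_3 {m : ℕ} (hm : 1 ≤ m) (u : E3 → EuclideanSpace ℝ (Fin m))
    (hu : ContDiff ℝ 1 u) (hiv : InnerVariation u (ball (0 : E3) 64)) :
    ∀ (x : E3) (r : ℝ), 0 < r → closedBall x r ⊆ ball (0 : E3) 64 →
      HasDerivAt (fun s : ℝ => Hphi u x s)
        ((2 / r) * Hphi u x r + 2 * Dphi u x r) r := by
  intro x r hr hball
  have hrne : r ≠ 0 := ne_of_gt hr
  have hUcont : Continuous u := hu.continuous
  have hDcont : Continuous (fderiv ℝ u) := hu.continuous_fderiv one_ne_zero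
  set c : E3 → ℝ := fun z => ‖z‖⁻¹ * psi ‖z‖ with hc
  set F : ℝ → E3 → ℝ := fun s z => ‖u (x + s • z)‖^2 * c z with hF
  set F' : ℝ → E3 → ℝ := fun s z =>
    (2 * (inner ℝ (u (x + s • z)) (fderiv ℝ u (x + s • z) z) : ℝ)) * c z with hF'
  obtain ⟨Mu, hMu⟩ :=
    (isCompact_closedBall x (r+1)).exists_bound_of_continuousOn hUcont.continuousOn
  obtain ⟨Md, hMd⟩ :=
    (isCompact_closedBall x (r+1)).exists_bound_of_continuousOn hDcont.continuousOn
  have hMu0 : 0 ≤ Mu := le_trans (norm_nonneg _) (hMu x (mem_closedBall_self (by linarith)))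
  have hMd0 : 0 ≤ Md := le_trans (norm_nonneg _) (hMd x (mem_closedBall_self (by linarith)))
  have hcmeas : Measurable c :=
    (continuous_norm.measurable.inv).mul (measurable_psi.comp continuous_norm.measurable)
  have hcbound : ∀ z : E3, |c z| ≤ 4 := fun z => abs_inv_mul_psi_le ‖z‖
  have hczero : ∀ z : E3, z ∉ closedBall (0:E3) 1 → c z = 0 := by
    intro z hz
    have h1 : 1 < ‖z‖ := by
      rw [mem_closedBall, dist_zero_right, not_le] at hz
      exact hz
    simp [hc, psi_eq_zero_of_ge h1.le]
  have hmem : ∀ s : ℝ, s ∈ ball r 1 → ∀ z ∈ closedBall (0:E3) 1,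
      x + s • z ∈ closedBall x (r+1) := by
    intro s hs z hz
    rw [mem_closedBall, dist_eq_norm, add_sub_cancel_left, norm_smul, Real.norm_eq_abs]
    have h1 : |s - r| < 1 := by rwa [mem_ball, Real.dist_eq] at hs
    have h2 : |s| ≤ r + 1 := by
      calc |s| = |(s - r) + r| := by ring_nf
        _ ≤ |s - r| + |r| := abs_add_le _ _
        _ ≤ r + 1 := by rw [abs_of_pos hr]; linarith
    have h3 : ‖z‖ ≤ 1 := by rwa [mem_closedBall, dist_zero_right] at hz
    calc |s| * ‖z‖ ≤ (r+1) * 1 := by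
          apply mul_le_mul h2 h3 (norm_nonneg _) (by linarith)
      _ = r + 1 := by ring
  -- differentiation under the integral sign
  have haff : ∀ s : ℝ, Continuous (fun z : E3 => x + s • z) := fun s =>
    continuous_const.add (continuous_id.const_smul s)
  have hsq : ∀ s : ℝ, Continuous (fun z : E3 => ‖u (x + s • z)‖ ^ 2) := fun s =>
    ((hUcont.comp (haff s)).norm.pow 2)
  have hF_meas : ∀ᶠ s in nhds r, AEStronglyMeasurable (F s) volume := by
    apply Filter.Eventually.of_forall
    intro s
    exact ((hsq s).aestronglyMeasurable).mul hcmeas.aestronglyMeasurable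
  have hFrmeas : AEStronglyMeasurable (F r) volume :=
    ((hsq r).aestronglyMeasurable).mul hcmeas.aestronglyMeasurable
  have hF_int : Integrable (F r) volume := by
    apply integrable_of_bdd_compact hFrmeas (isCompact_closedBall (0:E3) 1) (Mu^2 * 4)
    · intro z
      by_cases hz : z ∈ closedBall (0:E3) 1
      · have hmem' := hmem r (mem_ball_self one_pos) z hz
        have h1 : ‖u (x + r • z)‖ ≤ Mu := hMu _ hmem'
        have h2 : ‖u (x + r • z)‖ ^ 2 ≤ Mu ^ 2 := pow_le_pow_left₀ (norm_nonneg _) h1 2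
        simp only [hF]
        rw [abs_mul, abs_pow, abs_norm]
        exact mul_le_mul h2 (hcbound z) (abs_nonneg _) (by positivity)
      · simp only [hF, hczero z hz, mul_zero, abs_zero]
        positivity
    · intro z hz
      simp only [hF, hczero z hz, mul_zero]
  have hF'_meas : AEStronglyMeasurable (F' r) volume := by
    have hco : Continuous (fun z : E3 =>
        2 * (inner ℝ (u (x + r • z)) (fderiv ℝ u (x + r • z) z) : ℝ)) := by
      apply continuous_const.mul
      exact (hUcont.comp (haff r)).inner ((hDcont.comp (haff r)).clm_apply continuous_id)
    exact hco.aestronglyMeasurable.mul hcmeas.aestronglyMeasurable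
  have h_bound : ∀ᵐ z : E3, ∀ s ∈ ball r 1, ‖F' s z‖ ≤
      (closedBall (0:E3) 1).indicator (fun _ => 2 * (Mu * Md) * 4) z := by
    apply MeasureTheory.ae_of_all
    intro z s hs
    by_cases hz : z ∈ closedBall (0:E3) 1
    · rw [Set.indicator_of_mem hz]
      have hmem' := hmem s hs z hz
      have h3 : ‖z‖ ≤ 1 := by rwa [mem_closedBall, dist_zero_right] at hz
      have hinner : |(inner ℝ (u (x + s • z)) (fderiv ℝ u (x + s • z) z) : ℝ)| ≤ Mu * Md := by
        calc |(inner ℝ (u (x + s • z)) (fderiv ℝ u (x + s • z) z) : ℝ)|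
            ≤ ‖u (x + s • z)‖ * ‖fderiv ℝ u (x + s • z) z‖ := abs_real_inner_le_norm _ _
          _ ≤ Mu * Md := by
              apply mul_le_mul (hMu _ hmem') _ (norm_nonneg _) hMu0
              calc ‖fderiv ℝ u (x + s • z) z‖ ≤ ‖fderiv ℝ u (x + s • z)‖ * ‖z‖ :=
                    (fderiv ℝ u _).le_opNorm _
                _ ≤ Md * 1 := mul_le_mul (hMd _ hmem') h3 (norm_nonneg _) hMd0
                _ = Md := mul_one _
      rw [hF', Real.norm_eq_abs]
      simp only
      rw [abs_mul, abs_mul]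
      calc |2| * |(inner ℝ (u (x + s • z)) (fderiv ℝ u (x + s • z) z) : ℝ)| * |c z|
          ≤ |2| * (Mu * Md) * 4 := by
            apply mul_le_mul _ (hcbound z) (abs_nonneg _) (by positivity)
            apply mul_le_mul_of_nonneg_left hinner (abs_nonneg _)
        _ = 2 * (Mu * Md) * 4 := by norm_num
    · rw [Set.indicator_of_notMem hz, hF', Real.norm_eq_abs]
      simp only [hczero z hz, mul_zero, abs_zero]
      exact le_refl 0
  have bound_integrable :
      Integrable ((closedBall (0:E3) 1).indicator (fun _ => 2 * (Mu * Md) * 4)) volume := by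
    rw [integrable_indicator_iff (isCompact_closedBall (0:E3) 1).measurableSet]
    exact integrableOn_const (isCompact_closedBall (0:E3) 1).measure_lt_top.ne
  have h_diff : ∀ᵐ z : E3, ∀ s ∈ ball r 1, HasDerivAt (fun t => F t z) (F' s z) s := by
    apply MeasureTheory.ae_of_all
    intro z s hs
    have hgam : HasDerivAt (fun t : ℝ => x + t • z) z s := by
      simpa using ((hasDerivAt_id s).smul_const z).const_add x
    have hug : HasDerivAt (fun t => u (x + t • z)) (fderiv ℝ u (x + s • z) z) s :=
      ((hu.differentiable one_ne_zero _).hasFDerivAt).comp_hasDerivAt s hgam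
    exact hug.norm_sq.mul_const (c z)
  obtain ⟨-, hFderiv⟩ := hasDerivAt_integral_of_dominated_loc_of_deriv_le
    (ball_mem_nhds r (by norm_num : (0:ℝ) < 1)) hF_meas hF_int hF'_meas h_bound bound_integrable h_diff
  -- scaling identity for Hphi
  have hHscale : ∀ s : ℝ, 0 < s → Hphi u x s = s^2 * ∫ z : E3, F s z := by
    intro s hs
    have hsne : s ≠ 0 := ne_of_gt hs
    set v : E3 → ℝ := fun y => ‖u y‖^2 * (‖y - x‖⁻¹ * psi (‖y - x‖ / s)) * s with hv
    have hveq : ∀ z : E3, v (x + s • z) = F s z := by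
      intro z
      rw [hv, hF]
      simp only
      rw [add_sub_cancel_left, norm_smul, Real.norm_eq_abs, abs_of_pos hs,
        mul_inv, mul_div_cancel_left₀ _ hsne]
      have hss : s⁻¹ * s = 1 := inv_mul_cancel₀ hsne
      linear_combination (‖u (x + s • z)‖ ^ 2 * ‖z‖⁻¹ * psi ‖z‖) * hss
    have h1 : (∫ z : E3, F s z) = ∫ z : E3, v (x + s • z) := by
      apply integral_congr_ae
      filter_upwards with z using (hveq z).symm
    have h2 := scale_int v x hs
    have h3 : (∫ y : E3, v y) = (∫ y : E3, ‖u y‖^2 * ‖y - x‖⁻¹ * psi (‖x - y‖ / s)) * s := by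
      rw [hv, ← integral_mul_const]
      apply integral_congr_ae
      filter_upwards with y
      rw [norm_sub_rev x y]
      ring
    rw [h1, h2, h3, Hphi]
    field_simp
  -- the value of the derivative integral
  have hI : (∫ z : E3, F' r z) = (r^3)⁻¹ * (2 * (r * Dphi u x r)) := by
    set g : E3 → ℝ := fun y =>
      2 * ((inner ℝ (u y) (fderiv ℝ u y (y - x)) : ℝ) * (‖y - x‖⁻¹ * psi (‖y - x‖ / r))) with hg
    have hgeq : ∀ z : E3, F' r z = g (x + r • z) := by
      intro z
      rw [hF', hg]
      simp only
      rw [add_sub_cancel_left, (fderiv ℝ u (x + r • z)).map_smul, norm_smul,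
        Real.norm_eq_abs, abs_of_pos hr, mul_inv, mul_div_cancel_left₀ _ hrne,
        real_inner_smul_right]
      have hss : r⁻¹ * r = 1 := inv_mul_cancel₀ hrne
      linear_combination
        (-(2:ℝ) * (inner ℝ (u (x + r • z)) (fderiv ℝ u (x + r • z) z) : ℝ) * ‖z‖⁻¹ * psi ‖z‖) * hss
    have h1 : (∫ z : E3, F' r z) = ∫ z : E3, g (x + r • z) := by
      apply integral_congr_ae
      filter_upwards with z using hgeq z
    rw [h1, scale_int g x hr, hg]
    rw [integral_const_mul, key_IV u hu hiv x hr hball]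
  -- assemble
  have hpow : HasDerivAt (fun s : ℝ => s^2) (2*r) r := by
    simpa using hasDerivAt_pow 2 r
  have hprod : HasDerivAt (fun s : ℝ => s^2 * ∫ z : E3, F s z)
      (2*r * (∫ z : E3, F r z) + r^2 * ∫ z : E3, F' r z) r := hpow.mul hFderiv
  have hev : (fun s : ℝ => Hphi u x s) =ᶠ[nhds r] fun s => s^2 * ∫ z : E3, F s z := by
    filter_upwards [eventually_gt_nhds hr] with s hs using hHscale s hs
  have hfinal := hprod.congr_of_eventuallyEq hev
  have hval : (2 / r) * Hphi u x r + 2 * Dphi u x r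
      = 2*r * (∫ z : E3, F r z) + r^2 * ∫ z : E3, F' r z := by
    rw [hHscale r hr, hI]
    field_simp
  rw [hval]
  exact hfinal
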